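/- Let v ∈ ℝⁿ \ {0} with δ = |v·e₁|/|v| < 1, and set λ₁ = (1−δ)/(16√2). Then for every t ∈ ℝ with |t| ≥ 1 and every x ∈ ℝⁿ with |x| ≤ 4λ₁|v|⟨t⟩, one has |x + v t + e₁ t²/2| ≥ max{ c₁·|v|·|t| , c₂·t² }, where c₁ = √(2(1−δ²))/2 and c₂ = √(2(1−δ²))/(3+δ). -/

import Mathlib

open scoped InnerProductSpace
open MeasureTheory Real Filter

noncomputable section

set_option maxHeartbeats 1000000

lemma disc_poly (δ p : ℝ) (h0 : 0 ≤ δ) (h1 : δ ≤ 1) (hp0 : 0 ≤ p)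
    (hp2 : p ^ 2 = 2 * (1 - δ ^ 2)) :
    (4 * (3 + δ) * δ + 2 * p * (1 - δ)) ^ 2
      ≤ (16 - (1 - δ) ^ 2) * ((3 + δ) ^ 2 - 4 * p ^ 2) := by
  have hp32 : p ≤ 3 / 2 := by nlinarith
  have h1' : (0:ℝ) ≤ (3/2 - p) * (δ * (1 - δ) * (3 + δ)) := by
    have : (0:ℝ) ≤ δ * (1 - δ) * (3 + δ) :=
      mul_nonneg (mul_nonneg h0 (by linarith)) (by linarith)
    exact mul_nonneg (by linarith) this
  have h2' : (0:ℝ) ≤ (1 - δ) * (7 + 43 * δ + 93 * δ ^ 2 + 17 * δ ^ 3) := by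
    have : (0:ℝ) ≤ 7 + 43 * δ + 93 * δ ^ 2 + 17 * δ ^ 3 := by positivity
    exact mul_nonneg (by linarith) this
  have e : (16 - (1-δ)^2) * ((3+δ)^2 - 4*p^2) - (4*(3+δ)*δ + 2*p*(1-δ))^2
      = 16*((3/2 - p) * (δ*(1-δ)*(3+δ))) + (1-δ)*(7+43*δ+93*δ^2+17*δ^3)
        - 64*(p^2 - (2-2*δ^2)) := by ring
  have e2 : p ^ 2 - (2 - 2*δ^2) = 0 := by rw [hp2]; ring
  linarith [e, e2, h1', h2']


theorem stmt_1 (n : ℕ) (hn : 2 ≤ n)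
    (v : EuclideanSpace ℝ (Fin n)) (hv : v ≠ 0)
    (e1 : EuclideanSpace ℝ (Fin n))
    (he1 : e1 = EuclideanSpace.single ⟨0, by omega⟩ (1 : ℝ))
    (δ : ℝ) (hδ : δ = |⟪v, e1⟫_ℝ| / ‖v‖) (hδ1 : δ < 1)
    (lam : ℝ) (hlam : lam = (1 - δ) / (16 * Real.sqrt 2))
    (c1 c2 : ℝ) (hc1 : c1 = Real.sqrt (2 * (1 - δ ^ 2)) / 2)
    (hc2 : c2 = Real.sqrt (2 * (1 - δ ^ 2)) / (3 + δ))
    (t : ℝ) (ht : 1 ≤ |t|)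
    (x : EuclideanSpace ℝ (Fin n))
    (hx : ‖x‖ ≤ 4 * lam * ‖v‖ * Real.sqrt (1 + t ^ 2)) :
    max (c1 * ‖v‖ * |t|) (c2 * t ^ 2) ≤ ‖x + t • v + (t ^ 2 / 2) • e1‖ := by
  have hv0 : 0 < ‖v‖ := norm_pos_iff.mpr hv
  have hδ0 : 0 ≤ δ := by rw [hδ]; positivity
  have hδ2 : 0 ≤ 1 - δ ^ 2 := by
    have e : (1 - δ) * (1 + δ) = 1 - δ ^ 2 := by ring
    have h' := mul_nonneg (by linarith : (0:ℝ) ≤ 1 - δ) (by linarith : (0:ℝ) ≤ 1 + δ)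
    linarith
  set r : ℝ := Real.sqrt 2 with hr
  have hr0 : 0 < r := by rw [hr]; positivity
  have hr2 : r ^ 2 = 2 := Real.sq_sqrt (by norm_num)
  have hr32 : r ≤ 3 / 2 := by
    rw [hr, show (3:ℝ)/2 = Real.sqrt ((3/2)^2) from (Real.sqrt_sq (by norm_num)).symm]
    exact Real.sqrt_le_sqrt (by norm_num)
  set s : ℝ := Real.sqrt (1 - δ ^ 2) with hs
  have hs0 : 0 ≤ s := Real.sqrt_nonneg _
  have hs2 : s ^ 2 = 1 - δ ^ 2 := Real.sq_sqrt hδ2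
  have hs1 : s ≤ 1 := by
    rw [hs]
    exact Real.sqrt_le_one.mpr (by linarith [sq_nonneg δ])
  have hrs : Real.sqrt (2 * (1 - δ ^ 2)) = r * s := by
    rw [hr, hs, ← Real.sqrt_mul (by norm_num : (0:ℝ) ≤ 2)]
  have ht2 : 1 ≤ t ^ 2 := by nlinarith [sq_abs t, abs_nonneg t]
  set A : ℝ := ‖v‖ * |t| with hA
  set B : ℝ := t ^ 2 / 2 with hB
  have hA0 : 0 < A := mul_pos hv0 (by linarith)
  have hB0 : 0 < B := by rw [hB]; linarith
  set c : ℝ := (1 - δ) / 4 with hc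
  have hc0 : 0 ≤ c := by rw [hc]; linarith
  have hip : |⟪v, e1⟫_ℝ| = δ * ‖v‖ := by
    rw [hδ, div_mul_cancel₀ _ (ne_of_gt hv0)]
  have he1n : ‖e1‖ = 1 := by
    rw [he1, EuclideanSpace.norm_single]; norm_num
  set w : EuclideanSpace ℝ (Fin n) := t • v + (t ^ 2 / 2) • e1 with hw
  have hw2 : ‖w‖ ^ 2 = t ^ 2 * ‖v‖ ^ 2 + t ^ 3 * ⟪v, e1⟫_ℝ + t ^ 4 / 4 := by
    rw [hw, @norm_add_sq_real, real_inner_smul_left, real_inner_smul_right,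
      norm_smul, norm_smul, he1n, Real.norm_eq_abs, Real.norm_eq_abs, mul_pow,
      mul_pow, sq_abs, sq_abs]
    ring
  have hcross : -(2 * δ * A * B) ≤ t ^ 3 * ⟪v, e1⟫_ℝ := by
    have h1 : |t ^ 3 * ⟪v, e1⟫_ℝ| = |t| ^ 3 * (δ * ‖v‖) := by
      rw [abs_mul, abs_pow, hip]
    have h2 : |t| ^ 3 * (δ * ‖v‖) = 2 * δ * A * B := by
      rw [hA, hB]
      have h3 : |t| ^ 3 = |t| * t ^ 2 := by
        rw [pow_succ, sq_abs]; ring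
      rw [h3]; ring
    have h4 := neg_abs_le (t ^ 3 * ⟪v, e1⟫_ℝ)
    rw [h1, h2] at h4
    linarith
  have hwQ : A ^ 2 - 2 * δ * A * B + B ^ 2 ≤ ‖w‖ ^ 2 := by
    have hA2 : A ^ 2 = t ^ 2 * ‖v‖ ^ 2 := by
      rw [hA, mul_pow, sq_abs]; ring
    have hB2 : B ^ 2 = t ^ 4 / 4 := by rw [hB]; ring
    rw [hw2, hA2, hB2]; linarith
  have hXa : ‖x‖ ≤ c * A := by
    have hst : Real.sqrt (1 + t ^ 2) ≤ r * |t| := by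
      have h5 : r * |t| = Real.sqrt (2 * t ^ 2) := by
        rw [hr, Real.sqrt_mul (by norm_num : (0:ℝ) ≤ 2), Real.sqrt_sq_eq_abs]
      rw [h5]
      exact Real.sqrt_le_sqrt (by linarith)
    have hlam0 : 0 ≤ lam := by
      rw [hlam]; apply div_nonneg (by linarith) (by positivity)
    have h1 : 4 * lam * ‖v‖ * Real.sqrt (1 + t ^ 2) ≤ 4 * lam * ‖v‖ * (r * |t|) := by
      have : 0 ≤ 4 * lam * ‖v‖ := by positivity
      exact mul_le_mul_of_nonneg_left hst this
    have h2 : 4 * lam * ‖v‖ * (r * |t|) = c * A := by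
      rw [hlam, hc, hA]
      field_simp
      ring
    linarith [hx, h1]
  have htri : ‖w‖ ≤ ‖x + t • v + (t ^ 2 / 2) • e1‖ + ‖x‖ := by
    have hxw : x + t • v + (t ^ 2 / 2) • e1 = x + w := by rw [hw]; abel
    rw [hxw]
    have h6 : w = (x + w) - x := by abel
    calc ‖w‖ = ‖(x + w) - x‖ := by rw [← h6]
      _ ≤ ‖x + w‖ + ‖x‖ := norm_sub_le _ _
  have hsqle : ∀ p q : ℝ, 0 ≤ p → 0 ≤ q → p ^ 2 ≤ q ^ 2 → p ≤ q := by
    intro p q hp hq h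
    have h' := Real.sqrt_le_sqrt h
    rwa [Real.sqrt_sq hp, Real.sqrt_sq hq] at h'
  have hwn0 : 0 ≤ ‖w‖ := norm_nonneg _
  apply max_le
  · -- branch A
    have hc1' : c1 = r * s / 2 := by rw [hc1, hrs]
    have hc10 : 0 ≤ c1 := by rw [hc1']; positivity
    have hM : c1 + c ≤ s := by
      have h1 : 1 - δ ≤ s := by
        have e1' : 1 - δ ≤ s ^ 2 := by
          rw [hs2]
          nlinarith [mul_nonneg hδ0 (by linarith : (0:ℝ) ≤ 1 - δ)]
        have e2' : s ^ 2 ≤ s := by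
          calc s ^ 2 = s * s := sq s
            _ ≤ 1 * s := mul_le_mul_of_nonneg_right hs1 hs0
            _ = s := one_mul s
        linarith
      have h2 : r * s ≤ 3 / 2 * s := mul_le_mul_of_nonneg_right hr32 hs0
      rw [hc1', hc]
      linarith
    have hMsq : (c1 + c) ^ 2 ≤ s ^ 2 :=
      pow_le_pow_left₀ (add_nonneg hc10 hc0) hM 2
    have hkey : (c1 * A + c * A) ^ 2 ≤ ‖w‖ ^ 2 := by
      have h1 : (c1 * A + c * A) ^ 2 = (c1 + c) ^ 2 * A ^ 2 := by ring
      have h2 : (c1 + c) ^ 2 * A ^ 2 ≤ s ^ 2 * A ^ 2 :=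
        mul_le_mul_of_nonneg_right hMsq (sq_nonneg A)
      have h3 : s ^ 2 * A ^ 2 = (1 - δ ^ 2) * A ^ 2 := by rw [hs2]
      have h4 : (1 - δ ^ 2) * A ^ 2 ≤ A ^ 2 - 2 * δ * A * B + B ^ 2 := by
        have e4 : A ^ 2 - 2 * δ * A * B + B ^ 2 - (1 - δ ^ 2) * A ^ 2
            = (B - δ * A) ^ 2 := by ring
        linarith [sq_nonneg (B - δ * A), e4]
      linarith [hwQ, h2, h3.le, h3.ge, h1.le, h1.ge]
    have h3 : c1 * A + c * A ≤ ‖w‖ :=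
      hsqle _ _ (by positivity) hwn0 hkey
    have h7 : c1 * ‖v‖ * |t| = c1 * A := by rw [hA]; ring
    rw [h7]
    linarith [hXa, htri]
  · -- branch B
    have h3δ : (0:ℝ) < 3 + δ := by linarith
    have hc2' : c2 = r * s / (3 + δ) := by rw [hc2, hrs]
    have hc20 : 0 ≤ c2 := by rw [hc2']; positivity
    have hp2 : (r * s) ^ 2 = 2 * (1 - δ ^ 2) := by
      rw [mul_pow, hr2, hs2]
    have hdisc := disc_poly δ (r * s) hδ0 (le_of_lt hδ1) (by positivity) hp2
    have hL : (δ + 2 * c2 * c) ^ 2 ≤ (1 - c ^ 2) * (1 - (2 * c2) ^ 2) := by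
      have h16 : (0:ℝ) < 16 * (3 + δ) ^ 2 := by positivity
      rw [← mul_le_mul_iff_of_pos_right h16]
      calc (δ + 2 * c2 * c) ^ 2 * (16 * (3 + δ) ^ 2)
          = (4 * (3 + δ) * δ + 2 * (r * s) * (1 - δ)) ^ 2 := by
            rw [hc2', hc]; field_simp; ring
        _ ≤ (16 - (1 - δ) ^ 2) * ((3 + δ) ^ 2 - 4 * (r * s) ^ 2) := hdisc
        _ = (1 - c ^ 2) * (1 - (2 * c2) ^ 2) * (16 * (3 + δ) ^ 2) := by
            rw [hc2', hc]; field_simp; ring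
    have hcpos : 0 < 1 - c ^ 2 := by
      have hc12 : c ≤ 1 / 2 := by rw [hc]; linarith
      have h' : c * c ≤ (1/2) * (1/2) :=
        mul_le_mul hc12 hc12 hc0 (by norm_num)
      have e' : c ^ 2 = c * c := sq c
      linarith
    have hmul : (1 - c ^ 2) * ((A ^ 2 - 2 * δ * A * B + B ^ 2) - (2 * c2 * B + c * A) ^ 2)
        = ((1 - c ^ 2) * A - (δ + 2 * c2 * c) * B) ^ 2
          + ((1 - c ^ 2) * (1 - (2 * c2) ^ 2) - (δ + 2 * c2 * c) ^ 2) * B ^ 2 := by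
      ring
    have h0 : 0 ≤ (1 - c ^ 2) * ((A ^ 2 - 2 * δ * A * B + B ^ 2) - (2 * c2 * B + c * A) ^ 2) := by
      rw [hmul]
      exact add_nonneg (sq_nonneg _) (mul_nonneg (sub_nonneg.2 hL) (sq_nonneg B))
    have hquad : (2 * c2 * B + c * A) ^ 2 ≤ A ^ 2 - 2 * δ * A * B + B ^ 2 := by
      have h9 := (mul_nonneg_iff_of_pos_left hcpos).mp h0
      linarith
    have hkey : (2 * c2 * B + c * A) ^ 2 ≤ ‖w‖ ^ 2 := by linarith [hwQ]
    have h3 : 2 * c2 * B + c * A ≤ ‖w‖ :=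
      hsqle _ _ (by positivity) hwn0 hkey
    have h8 : c2 * t ^ 2 = 2 * c2 * B := by rw [hB]; ring
    rw [h8]
    linarith [hXa, htri]
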